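/- Let m, n be positive integers with mn ≥ 2 such that at least one of m and n is odd, and let ℓ be an integer with 0 ≤ ℓ ≤ m such that |m − 2ℓ| and n are coprime. On the set (Z/mZ) × (Z/nZ) of cells of a totally filled m × n array, define the permutations ω_c(i,j) = (i+1, j) and ω_r(i,j) = (i, j+1) if the representative of i lies in {0,…,m−ℓ−1} and ω_r(i,j) = (i, j−1) otherwise (i.e., rows are ordered left to right for the first m−ℓ rows and right to left for the remaining ℓ rows, columns top to bottom). Then the permutation ω_c ∘ ω_r is a single cycle of length mn, that is, the orbit of every cell under ω_c ∘ ω_r is all of (Z/mZ) × (Z/nZ). -/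

import Mathlib

/-- Let `m, n` be positive integers with `mn ≥ 2`, at least one of `m` and `n`
odd, and let `ℓ ≤ m` be such that `|m − 2ℓ|` and `n` are coprime.  On the cells
`(ZMod m) × (ZMod n)` of a totally filled `m × n` array, let `ωc (i,j) = (i+1, j)` and let
`ωr (i,j) = (i, j+1)` if the representative of `i` lies in `{0,…,m−ℓ−1}`, and
`ωr (i,j) = (i, j−1)` otherwise.  Then `ωc ∘ ωr` is a single cycle of length `mn`: the orbit of
every cell under `ωc ∘ ωr` is all of `(ZMod m) × (ZMod n)`. -/
theorem compatible_orderings_totally_filled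
    (m n : ℕ) (hm : 0 < m) (hn : 0 < n) (hmn : 2 ≤ m * n)
    (hodd : Odd m ∨ Odd n)
    (ℓ : ℕ) (hℓ : ℓ ≤ m) (hcop : Nat.Coprime ((m : ℤ) - 2 * ℓ).natAbs n)
    (ωc ωr : ZMod m × ZMod n → ZMod m × ZMod n)
    (hωc : ∀ c, ωc c = (c.1 + 1, c.2))
    (hωr : ∀ c, ωr c = if c.1.val < m - ℓ then (c.1, c.2 + 1) else (c.1, c.2 - 1)) :
    ∀ c c' : ZMod m × ZMod n, ∃ k : ℕ, (ωc ∘ ωr)^[k] c = c' := by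
  haveI : NeZero m := ⟨hm.ne'⟩
  haveI : NeZero n := ⟨hn.ne'⟩
  set d : ZMod m → ZMod n := fun i => if i.val < m - ℓ then 1 else -1 with hd
  set σ : ZMod m × ZMod n → ZMod m × ZMod n := ωc ∘ ωr with hσ
  have hstep : ∀ (i : ZMod m) (j : ZMod n), σ (i, j) = (i + 1, j + d i) := by
    intro i j
    simp only [hσ, Function.comp_apply, hωr, hd]
    split
    · rw [hωc]
    · rw [hωc]; simp [sub_eq_add_neg]
  have hiter : ∀ (k : ℕ) (i : ZMod m) (j : ZMod n),
      σ^[k] (i, j) = (i + (k : ZMod m), j + ∑ t ∈ Finset.range k, d (i + (t : ZMod m))) := by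
    intro k
    induction k with
    | zero => intro i j; simp
    | succ k ih =>
      intro i j
      rw [Function.iterate_succ_apply, hstep, ih]
      refine Prod.ext ?_ ?_
      · show i + 1 + (k : ZMod m) = i + ((k : ℕ) + 1 : ℕ)
        push_cast; ring
      · show j + d i + ∑ t ∈ Finset.range k, d (i + 1 + (t : ZMod m))
            = j + ∑ t ∈ Finset.range (k + 1), d (i + (t : ZMod m))
        rw [Finset.sum_range_succ']
        simp only [Nat.cast_zero, add_zero, Nat.cast_add, Nat.cast_one]
        rw [add_assoc, add_comm (d i)]
        congr 1
        congr 1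
        apply Finset.sum_congr rfl
        intro t _
        congr 1
        ring
  -- card of the "increasing" rows
  have hcard : (Finset.univ.filter (fun x : ZMod m => x.val < m - ℓ)).card = m - ℓ := by
    conv_rhs => rw [show m - ℓ = (Finset.range (m - ℓ)).card from (Finset.card_range _).symm]
    exact Finset.card_nbij' (fun x => x.val) (fun t => (t : ZMod m))
      (fun x hx => by
        simp only [Finset.mem_coe, Finset.mem_filter] at hx
        simpa using hx.2)
      (fun t ht => by
        simp only [Finset.mem_coe, Finset.mem_range] at ht
        simp only [Finset.mem_coe, Finset.mem_filter, Finset.mem_univ, true_and]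
        rwa [ZMod.val_cast_of_lt (lt_of_lt_of_le ht (Nat.sub_le m ℓ))])
      (fun x _ => by simp [ZMod.natCast_val, ZMod.cast_id])
      (fun t ht => by
        simp only [Finset.mem_coe, Finset.mem_range] at ht
        exact ZMod.val_cast_of_lt (lt_of_lt_of_le ht (Nat.sub_le m ℓ)))
  have hcard' : (Finset.univ.filter (fun x : ZMod m => ¬ x.val < m - ℓ)).card = ℓ := by
    have h := Finset.card_filter_add_card_filter_not
      (s := (Finset.univ : Finset (ZMod m))) (p := fun x : ZMod m => x.val < m - ℓ)
    rw [hcard, Finset.card_univ, ZMod.card] at h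
    omega
  have hsumall : ∑ x : ZMod m, d x = ((m - ℓ : ℕ) : ZMod n) - (ℓ : ZMod n) := by
    rw [hd]
    rw [Finset.sum_ite, Finset.sum_const, Finset.sum_const, hcard, hcard']
    simp [sub_eq_add_neg]
  -- reindexing: sum over a full period is the sum over all rows
  have hfull : ∀ i : ZMod m,
      ∑ t ∈ Finset.range m, d (i + (t : ZMod m)) = ((m - ℓ : ℕ) : ZMod n) - (ℓ : ZMod n) := by
    intro i
    rw [← hsumall]
    exact Finset.sum_nbij' (fun t => i + (t : ZMod m)) (fun x => (x - i).val)
      (fun t _ => Finset.mem_univ _)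
      (fun x _ => Finset.mem_range.2 (ZMod.val_lt _))
      (fun t ht => by
        simp only [Finset.mem_range] at ht
        show ((i + (t : ZMod m)) - i).val = t
        rw [add_sub_cancel_left, ZMod.val_cast_of_lt ht])
      (fun x _ => by simp [ZMod.natCast_val, ZMod.cast_id])
      (fun t _ => rfl)
  set e : ZMod n := ((m - ℓ : ℕ) : ZMod n) - (ℓ : ZMod n) with he
  have hσm : ∀ (i : ZMod m) (j : ZMod n), σ^[m] (i, j) = (i, j + e) := by
    intro i j
    rw [hiter, hfull, ZMod.natCast_self, add_zero]
  have hσmk : ∀ (k : ℕ) (i : ZMod m) (j : ZMod n),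
      σ^[m * k] (i, j) = (i, j + (k : ZMod n) * e) := by
    intro k
    induction k with
    | zero => intro i j; simp
    | succ k ih =>
      intro i j
      rw [show m * (k + 1) = m + m * k by ring, Function.iterate_add_apply, ih, hσm]
      refine Prod.ext rfl ?_
      show j + (k : ZMod n) * e + e = j + ((k : ℕ) + 1 : ℕ) * e
      push_cast; ring
  -- e is a unit of ZMod n
  have hcop' : IsCoprime ((m : ℤ) - 2 * ℓ) (n : ℤ) := by
    rw [Int.isCoprime_iff_gcd_eq_one]
    simpa [Int.gcd] using hcop
  obtain ⟨u, v, huv⟩ := hcop'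
  have hecast : (((m : ℤ) - 2 * ℓ : ℤ) : ZMod n) = e := by
    rw [he]
    push_cast [Nat.cast_sub hℓ]
    ring
  have hu : (u : ZMod n) * e = 1 := by
    have := congrArg (fun z : ℤ => (z : ZMod n)) huv
    push_cast at this
    rw [ZMod.natCast_self, mul_zero, add_zero] at this
    rw [← hecast]
    push_cast
    linear_combination this
  -- main argument
  rintro ⟨i, j⟩ ⟨i', j'⟩
  set k0 : ℕ := (i' - i).val with hk0
  have h0 : σ^[k0] (i, j) = (i', j + ∑ t ∈ Finset.range k0, d (i + (t : ZMod m))) := by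
    rw [hiter]
    congr 1
    rw [hk0, ZMod.natCast_val, ZMod.cast_id]
    ring
  set s : ZMod n := ∑ t ∈ Finset.range k0, d (i + (t : ZMod m)) with hs
  set δ : ZMod n := j' - (j + s) with hδ
  set k1 : ℕ := (δ * (u : ZMod n)).val with hk1
  refine ⟨m * k1 + k0, ?_⟩
  rw [Function.iterate_add_apply, h0, hσmk]
  refine Prod.ext rfl ?_
  show j + s + (k1 : ZMod n) * e = j'
  rw [hk1, ZMod.natCast_val, ZMod.cast_id, mul_assoc, hu, mul_one, hδ]
  ring
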